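/- Let E/F be a finite tamely ramified extension of nonarchimedean local fields, let s ∈ C_E, and let σ_1, σ_2 : E → F̄ be F-algebra embeddings into an algebraic closure F̄ of F such that σ_1(s) ≠ σ_2(s). Then ord(σ_1(s) − σ_2(s)) = ord(s). -/

import Mathlib

/-- A surjective additive `ℤ`-valued valuation on a field `K`, written additively with
values in `WithTop ℤ` (with `v 0 = ⊤`). -/
structure IsZValuation (K : Type*) [Field K] (v : K → WithTop ℤ) : Prop where
  map_zero : v 0 = ⊤
  map_one : v 1 = 0
  map_mul : ∀ x y : K, v (x * y) = v x + v y
  min_le_map_add : ∀ x y : K, min (v x) (v y) ≤ v (x + y)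
  surjective : ∀ n : ℤ, ∃ x : K, v x = (n : WithTop ℤ)

/-- `K`, equipped with the normalized valuation `v`, is a nonarchimedean local field with
residue characteristic `p`: `v` is a surjective `ℤ`-valued valuation, `K` is (sequentially)
complete with respect to `v`, the residue field is finite (the valuation ring is covered by
finitely many residue classes), and `p` is a prime number of positive valuation (so the
residue field has characteristic `p`). -/
structure IsNonarchLocalField (K : Type*) [Field K] (v : K → WithTop ℤ) (p : ℕ) : Prop where
  isZValuation : IsZValuation K v
  complete : ∀ f : ℕ → K,
    (∀ N : ℤ, ∃ M : ℕ, ∀ m, M ≤ m → ∀ n, M ≤ n → (N : WithTop ℤ) ≤ v (f m - f n)) →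
    ∃ L : K, ∀ N : ℤ, ∃ M : ℕ, ∀ n, M ≤ n → (N : WithTop ℤ) ≤ v (f n - L)
  finiteResidue : ∃ S : Finset K, ∀ x : K, 0 ≤ v x → ∃ s ∈ S, 0 < v (x - s)
  prime : p.Prime
  v_p_pos : 0 < v (p : K)
/-- `z` is a root of unity whose order is prime to `p`. -/
def IsPrimeToRootOfUnity (p : ℕ) {K : Type*} [Monoid K] (z : K) : Prop :=
  ∃ n : ℕ, 0 < n ∧ ¬ p ∣ n ∧ z ^ n = 1

/-- The subgroup `C_E` of `Eˣ` generated by the uniformizer `πE` together with all roots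
of unity in `E` of order prime to `p`. -/
def stdGroup (p : ℕ) {E : Type*} [Field E] (πE : Eˣ) : Subgroup Eˣ :=
  Subgroup.closure ({πE} ∪ {z : Eˣ | IsPrimeToRootOfUnity p (z : E)})

/-- A `ℚ`-valued valuation, written additively with values in `WithTop ℚ`. -/
structure IsQValuation (K : Type*) [Field K] (w : K → WithTop ℚ) : Prop where
  map_zero : w 0 = ⊤
  map_one : w 1 = 0
  map_mul : ∀ x y : K, w (x * y) = w x + w y
  min_le_map_add : ∀ x y : K, min (w x) (w y) ≤ w (x + y)

namespace IsQValuation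
variable {K : Type*} [Field K] {w : K → WithTop ℚ}

lemma ne_top (hw : IsQValuation K w) {x : K} (hx : x ≠ 0) : w x ≠ ⊤ := by
  intro h
  have h2 := hw.map_mul x x⁻¹
  rw [mul_inv_cancel₀ hx, hw.map_one, h, top_add] at h2
  simp at h2

lemma exists_coe (hw : IsQValuation K w) {x : K} (hx : x ≠ 0) : ∃ q : ℚ, w x = (q : WithTop ℚ) := by
  rcases WithTop.ne_top_iff_exists.mp (hw.ne_top hx) with ⟨q, hq⟩
  exact ⟨q, hq.symm⟩

lemma pow_coe (hw : IsQValuation K w) {x : K} {q : ℚ} (h : w x = (q : WithTop ℚ)) (n : ℕ) :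
    w (x ^ n) = ((n * q : ℚ) : WithTop ℚ) := by
  induction n with
  | zero => simpa using hw.map_one
  | succ n ih =>
    rw [pow_succ, hw.map_mul, ih, h, ← WithTop.coe_add]
    congr 1
    push_cast
    ring

lemma inv_coe (hw : IsQValuation K w) {x : K} {q : ℚ} (hx : x ≠ 0) (h : w x = (q : WithTop ℚ)) :
    w x⁻¹ = ((-q : ℚ) : WithTop ℚ) := by
  have h2 := hw.map_mul x x⁻¹
  rw [mul_inv_cancel₀ hx, hw.map_one, h] at h2
  obtain ⟨r, hr⟩ := hw.exists_coe (inv_ne_zero hx)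
  rw [hr] at h2 ⊢
  rw [← WithTop.coe_add] at h2
  have : q + r = 0 := by exact_mod_cast h2.symm
  congr 1
  linarith

lemma zpow_coe (hw : IsQValuation K w) {x : K} {q : ℚ} (hx : x ≠ 0) (h : w x = (q : WithTop ℚ)) (a : ℤ) :
    w (x ^ a) = ((a * q : ℚ) : WithTop ℚ) := by
  cases a with
  | ofNat n => rw [Int.ofNat_eq_coe, zpow_natCast, hw.pow_coe h]; norm_num
  | negSucc n =>
    rw [zpow_negSucc, hw.inv_coe (pow_ne_zero _ hx) (hw.pow_coe h (n+1))]
    congr 1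
    push_cast
    ring

lemma eq_zero_of_pow_eq_one (hw : IsQValuation K w) {x : K} {n : ℕ} (hn : n ≠ 0) (h : x ^ n = 1) : w x = 0 := by
  have hx : x ≠ 0 := by rintro rfl; rw [zero_pow hn] at h; exact zero_ne_one h
  obtain ⟨q, hq⟩ := hw.exists_coe hx
  have h2 := hw.pow_coe hq n
  rw [h, hw.map_one] at h2
  have h3 : (n : ℚ) * q = 0 := by exact_mod_cast h2.symm
  have hq0 : q = 0 := by
    rcases mul_eq_zero.mp h3 with h4 | h4
    · exact absurd (by exact_mod_cast h4) hn
    · exact h4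
  rw [hq, hq0]; rfl

lemma map_neg (hw : IsQValuation K w) (x : K) : w (-x) = w x := by
  have h1 : w (-1 : K) = 0 := hw.eq_zero_of_pow_eq_one two_ne_zero (by ring)
  rw [show (-x : K) = -1 * x by ring, hw.map_mul, h1, zero_add]

lemma natCast_nonneg (hw : IsQValuation K w) (n : ℕ) : 0 ≤ w (n : K) := by
  induction n with
  | zero => rw [Nat.cast_zero, hw.map_zero]; exact le_top
  | succ n ih =>
    have h := hw.min_le_map_add (n : K) 1
    rw [hw.map_one] at h
    calc (0 : WithTop ℚ) ≤ min (w (n : K)) 0 := le_min ih le_rfl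
    _ ≤ w ((n : K) + 1) := h
    _ = w ((n + 1 : ℕ) : K) := by push_cast; ring_nf

lemma intCast_nonneg (hw : IsQValuation K w) (a : ℤ) : 0 ≤ w (a : K) := by
  rcases Int.natAbs_eq a with h | h
  · rw [h, Int.cast_natCast]; exact hw.natCast_nonneg a.natAbs
  · rw [h, Int.cast_neg, Int.cast_natCast, hw.map_neg]
    exact hw.natCast_nonneg a.natAbs

lemma le_sum (hw : IsQValuation K w) {ι : Type*} {t : Finset ι} {f : ι → K} {c : WithTop ℚ}
    (h : ∀ i ∈ t, c ≤ w (f i)) : c ≤ w (∑ i ∈ t, f i) := by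
  classical
  induction t using Finset.induction_on with
  | empty => rw [Finset.sum_empty, hw.map_zero]; exact le_top
  | insert _ _ hx ih =>
    rename_i a t2
    rw [Finset.sum_insert hx]
    refine le_trans (le_min (h _ (Finset.mem_insert_self _ _))
      (ih fun i hi => h i (Finset.mem_insert_of_mem hi))) (hw.min_le_map_add _ _)

lemma natCast_eq_zero (hw : IsQValuation K w) {p N : ℕ} (hp : p.Prime) (hwp : 0 < w (p : K))
    (hpN : ¬ p ∣ N) : w (N : K) = 0 := by
  have hco : IsCoprime (p : ℤ) (N : ℤ) :=
    Nat.isCoprime_iff_coprime.mpr (hp.coprime_iff_not_dvd.mpr hpN)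
  obtain ⟨a, b, hab⟩ := hco
  have habK : (a : K) * (p : K) + (b : K) * (N : K) = 1 := by
    have := congrArg (fun z : ℤ => (z : K)) hab
    push_cast at this
    simpa using this
  have h1 : min (w ((a:K) * (p:K))) (w ((b:K) * (N:K))) ≤ 0 := by
    have := hw.min_le_map_add ((a:K) * (p:K)) ((b:K) * (N:K))
    rw [habK, hw.map_one] at this
    exact this
  have h2 : 0 < w ((a:K) * (p:K)) := by
    rw [hw.map_mul]
    calc (0 : WithTop ℚ) < w (p : K) := hwp
    _ ≤ w (a : K) + w (p : K) := le_add_of_nonneg_left (hw.intCast_nonneg a)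
  have h3 : w ((b:K) * (N:K)) ≤ 0 := by
    rcases min_le_iff.mp h1 with h | h
    · exact absurd (lt_of_lt_of_le h2 h) (by simp)
    · exact h
  rw [hw.map_mul] at h3
  have h4 : w (N : K) ≤ 0 :=
    le_trans (le_add_of_nonneg_left (hw.intCast_nonneg b)) h3
  exact le_antisymm h4 (by exact_mod_cast hw.natCast_nonneg N)

/-- key lemma: prime-to-p root of unity `u ≠ 1` has `w (u - 1) = 0`. -/
lemma sub_one_eq_zero (hw : IsQValuation K w) {u : K} {N : ℕ} (hN : N ≠ 0) (hu : u ^ N = 1) (hune : u ≠ 1)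
    (hNval : w (N : K) = 0) : w (u - 1) = 0 := by
  have hu0 : u ≠ 0 := by rintro rfl; rw [zero_pow hN] at hu; exact zero_ne_one hu
  have hwu : w u = 0 := hw.eq_zero_of_pow_eq_one hN hu
  -- lower bound
  have hge : 0 ≤ w (u - 1) := by
    have h := hw.min_le_map_add u (-1)
    rw [hw.map_neg, hw.map_one, hwu] at h
    simpa [sub_eq_add_neg] using h
  -- sum of powers is zero
  have hS : (∑ i ∈ Finset.range N, u ^ i) = 0 := by
    have h := geom_sum_mul u N
    rw [hu, sub_self] at h
    rcases mul_eq_zero.mp h with h | h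
    · exact h
    · exact absurd (sub_eq_zero.mp h) hune
  have hNsum : ((N : K)) = ∑ i ∈ Finset.range N, (1 - u ^ i) := by
    rw [Finset.sum_sub_distrib, hS, sub_zero, Finset.sum_const, Finset.card_range,
      nsmul_eq_mul, mul_one]
  have hle : w (u - 1) ≤ 0 := by
    rw [← hNval, hNsum]
    refine hw.le_sum fun i _ => ?_
    have hfac : (1 : K) - u ^ i = -((∑ j ∈ Finset.range i, u ^ j) * (u - 1)) := by
      rw [geom_sum_mul]; ring
    rw [hfac, hw.map_neg, hw.map_mul]
    refine le_add_of_nonneg_left (hw.le_sum fun j _ => ?_)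
    rw [hw.pow_coe hwu]
    simp
  exact le_antisymm hle hge

end IsQValuation

namespace IsZValuation
variable {K : Type*} [Field K] {v : K → WithTop ℤ}

lemma ne_top (hv : IsZValuation K v) {x : K} (hx : x ≠ 0) : v x ≠ ⊤ := by
  intro h
  have h2 := hv.map_mul x x⁻¹
  rw [mul_inv_cancel₀ hx, hv.map_one, h, top_add] at h2
  simp at h2

lemma exists_coe (hv : IsZValuation K v) {x : K} (hx : x ≠ 0) :
    ∃ q : ℤ, v x = (q : WithTop ℤ) := by
  rcases WithTop.ne_top_iff_exists.mp (hv.ne_top hx) with ⟨q, hq⟩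
  exact ⟨q, hq.symm⟩

lemma pow_coe (hv : IsZValuation K v) {x : K} {q : ℤ} (h : v x = (q : WithTop ℤ)) (n : ℕ) :
    v (x ^ n) = ((n * q : ℤ) : WithTop ℤ) := by
  induction n with
  | zero => simpa using hv.map_one
  | succ n ih =>
    rw [pow_succ, hv.map_mul, ih, h, ← WithTop.coe_add]
    congr 1
    push_cast
    ring

lemma inv_coe (hv : IsZValuation K v) {x : K} {q : ℤ} (hx : x ≠ 0)
    (h : v x = (q : WithTop ℤ)) : v x⁻¹ = ((-q : ℤ) : WithTop ℤ) := by
  have h2 := hv.map_mul x x⁻¹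
  rw [mul_inv_cancel₀ hx, hv.map_one, h] at h2
  obtain ⟨r, hr⟩ := hv.exists_coe (inv_ne_zero hx)
  rw [hr] at h2 ⊢
  rw [← WithTop.coe_add] at h2
  have : q + r = 0 := by exact_mod_cast h2.symm
  congr 1
  linarith

lemma zpow_coe (hv : IsZValuation K v) {x : K} {q : ℤ} (hx : x ≠ 0)
    (h : v x = (q : WithTop ℤ)) (a : ℤ) : v (x ^ a) = ((a * q : ℤ) : WithTop ℤ) := by
  cases a with
  | ofNat n => rw [Int.ofNat_eq_coe, zpow_natCast, hv.pow_coe h]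
  | negSucc n =>
    rw [zpow_negSucc, hv.inv_coe (pow_ne_zero _ hx) (hv.pow_coe h (n+1))]
    congr 1
    rw [Int.negSucc_eq]
    push_cast
    ring

lemma eq_zero_of_pow_eq_one (hv : IsZValuation K v) {x : K} {n : ℕ} (hn : n ≠ 0)
    (h : x ^ n = 1) : v x = 0 := by
  have hx : x ≠ 0 := by rintro rfl; rw [zero_pow hn] at h; exact zero_ne_one h
  obtain ⟨q, hq⟩ := hv.exists_coe hx
  have h2 := hv.pow_coe hq n
  rw [h, hv.map_one] at h2
  have h3 : (n : ℤ) * q = 0 := by exact_mod_cast h2.symm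
  have hq0 : q = 0 := by
    rcases mul_eq_zero.mp h3 with h4 | h4
    · exact absurd (by exact_mod_cast h4) hn
    · exact h4
  rw [hq, hq0]; rfl

end IsZValuation

lemma isPrimeToRootOfUnity_one {p : ℕ} (hp : p.Prime) {K : Type*} [Monoid K] :
    IsPrimeToRootOfUnity p (1 : K) :=
  ⟨1, one_pos, fun h => hp.one_lt.ne' (Nat.dvd_one.mp h), one_pow 1⟩

lemma stdGroup_decomp {p : ℕ} (hp : p.Prime) {E : Type*} [Field E] (πE : Eˣ) {s : Eˣ}
    (hs : s ∈ stdGroup p πE) :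
    ∃ (a : ℤ) (ζ : Eˣ), IsPrimeToRootOfUnity p (ζ : E) ∧ s = πE ^ a * ζ := by
  refine Subgroup.closure_induction ?_ ?_ ?_ ?_ hs
  · rintro x (hx | hx)
    · rcases hx with rfl
      exact ⟨1, 1, isPrimeToRootOfUnity_one hp, by simp⟩
    · exact ⟨0, x, hx, by simp⟩
  · exact ⟨0, 1, isPrimeToRootOfUnity_one hp, by simp⟩
  · rintro x y - - ⟨a, ζ, ⟨n, hn, hpn, hζ⟩, rfl⟩ ⟨b, ξ, ⟨k, hk, hpk, hξ⟩, rfl⟩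
    refine ⟨a + b, ζ * ξ, ⟨n * k, Nat.mul_pos hn hk, ?_, ?_⟩, ?_⟩
    · intro h
      rcases (Nat.Prime.dvd_mul hp).mp h with h | h
      exacts [hpn h, hpk h]
    · push_cast
      rw [mul_pow, pow_mul, hζ, one_pow, one_mul, mul_comm n k, pow_mul, hξ, one_pow]
    · rw [zpow_add, mul_mul_mul_comm, mul_assoc]
  · rintro x - ⟨a, ζ, ⟨n, hn, hpn, hζ⟩, rfl⟩
    refine ⟨-a, ζ⁻¹, ⟨n, hn, hpn, ?_⟩, ?_⟩
    · push_cast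
      rw [inv_pow, hζ, inv_one]
    · rw [mul_inv, zpow_neg]

/-- Let `E/F` be a finite tamely ramified extension of nonarchimedean
local fields, `s ∈ C_E` (with `v_E s = m`, so that `ord s = m / e`), and let
`σ₁, σ₂ : E → F̄` be `F`-algebra embeddings into an algebraic closure of `F` with
`σ₁ s ≠ σ₂ s`. Then `ord (σ₁ s - σ₂ s) = ord s = m / e`, where `ord` is the unique
extension of `v_F` to a `ℚ`-valued valuation of `F̄`. -/
theorem ord_sub_embeddings_of_mem_stdGroup
    (p : ℕ) (F E : Type*) [Field F] [Field E] [Algebra F E] [FiniteDimensional F E]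
    (vF : F → WithTop ℤ) (vE : E → WithTop ℤ)
    (hF : IsNonarchLocalField F vF p) (hE : IsNonarchLocalField E vE p)
    (e : ℕ) (hcomp : ∀ x : F, vE (algebraMap F E x) = e • vF x)
    (htame : ¬ p ∣ e)
    (πF : F) (hπF : vF πF = 1)
    (πE : Eˣ) (hπE : vE ↑πE = 1)
    (zE : E) (hzE : IsPrimeToRootOfUnity p zE)
    (hπzE : (πE : E) ^ e * zE = algebraMap F E πF)
    (ord : AlgebraicClosure F → WithTop ℚ) (hord : IsQValuation (AlgebraicClosure F) ord)
    (hordext : ∀ x : F,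
      ord (algebraMap F (AlgebraicClosure F) x) = WithTop.map (fun n : ℤ => (n : ℚ)) (vF x))
    (s : Eˣ) (hs : s ∈ stdGroup p πE)
    (m : ℤ) (hm : vE ↑s = (m : WithTop ℤ))
    (σ₁ σ₂ : E →ₐ[F] AlgebraicClosure F)
    (hne : σ₁ ↑s ≠ σ₂ ↑s) :
    ord (σ₁ ↑s - σ₂ ↑s) = (((m : ℚ) / (e : ℚ) : ℚ) : WithTop ℚ) := by
  classical
  have hvE := hE.isZValuation
  have hp := hE.prime
  obtain ⟨a, ζ, hζ, hsdec⟩ := stdGroup_decomp hp πE hs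
  obtain ⟨nζ, hnζpos, hpnζ, hζpow⟩ := hζ
  obtain ⟨nz, hnzpos, hpnz, hzpow⟩ := hzE
  have he0 : e ≠ 0 := fun h => htame (h ▸ dvd_zero p)
  -- a = m
  have hπE1 : vE (πE : E) = ((1 : ℤ) : WithTop ℤ) := by exact_mod_cast hπE
  have hvζ : vE (ζ : E) = 0 := hvE.eq_zero_of_pow_eq_one hnζpos.ne' hζpow
  have hsE : (s : E) = (πE : E) ^ (a : ℤ) * (ζ : E) := by
    rw [hsdec, Units.val_mul, Units.val_zpow_eq_zpow_val]
  have hva : vE (s : E) = ((a * 1 : ℤ) : WithTop ℤ) := by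
    rw [hsE, hvE.map_mul, hvζ, add_zero, hvE.zpow_coe (Units.ne_zero πE) hπE1]
  have ham : a = m := by
    rw [hva] at hm
    have h : a * 1 = m := by exact_mod_cast hm
    linarith
  subst ham
  -- embeddings are injective
  have hσne : ∀ (σ : E →ₐ[F] AlgebraicClosure F) (x : E), x ≠ 0 → σ x ≠ 0 := by
    intro σ x hx h
    exact hx ((map_eq_zero σ).mp h)
  have hres : ∀ σ : E →ₐ[F] AlgebraicClosure F,
      (σ (πE : E)) ^ e * σ zE = algebraMap F (AlgebraicClosure F) πF := by
    intro σ
    rw [← map_pow, ← map_mul, hπzE, σ.commutes]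
  have hordπF : ord (algebraMap F (AlgebraicClosure F) πF) = ((1 : ℚ) : WithTop ℚ) := by
    rw [hordext, hπF]
    rfl
  have hordz : ∀ σ : E →ₐ[F] AlgebraicClosure F, ord (σ zE) = 0 := fun σ =>
    hord.eq_zero_of_pow_eq_one hnzpos.ne' (by rw [← map_pow, hzpow, map_one])
  have hπF0 : πF ≠ 0 := by
    rintro rfl
    rw [hF.isZValuation.map_zero] at hπF
    simp at hπF
  have hordπ : ∀ σ : E →ₐ[F] AlgebraicClosure F,
      ord (σ (πE : E)) = (((e : ℚ)⁻¹ : ℚ) : WithTop ℚ) := by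
    intro σ
    have hne0 : σ (πE : E) ≠ 0 := hσne σ _ (Units.ne_zero πE)
    obtain ⟨q, hq⟩ := hord.exists_coe hne0
    have h1 : ord ((σ (πE : E)) ^ e * σ zE) = ((e * q : ℚ) : WithTop ℚ) := by
      rw [hord.map_mul, hord.pow_coe hq, hordz, add_zero]
    rw [hres, hordπF] at h1
    have h2 : (e : ℚ) * q = 1 := by exact_mod_cast h1.symm
    have he0' : (e : ℚ) ≠ 0 := by exact_mod_cast he0
    have h3 : q = (e : ℚ)⁻¹ := by
      field_simp
      linarith
    rw [hq, h3]
  have hordζ : ∀ σ : E →ₐ[F] AlgebraicClosure F, ord (σ (ζ : E)) = 0 := fun σ =>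
    hord.eq_zero_of_pow_eq_one hnζpos.ne' (by rw [← map_pow, hζpow, map_one])
  have hords : ∀ σ : E →ₐ[F] AlgebraicClosure F,
      ord (σ (s : E)) = (((a : ℚ) * (e : ℚ)⁻¹ : ℚ) : WithTop ℚ) := by
    intro σ
    have hne0 : σ (πE : E) ≠ 0 := hσne σ _ (Units.ne_zero πE)
    rw [hsE, map_mul, map_zpow₀, hord.map_mul, hordζ, add_zero,
      hord.zpow_coe hne0 (hordπ σ)]
  -- the ratio u
  have hx2 : σ₂ (s : E) ≠ 0 := hσne σ₂ _ (Units.ne_zero s)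
  set u : AlgebraicClosure F := σ₁ (s : E) * (σ₂ (s : E))⁻¹ with hu
  have hune : u ≠ 1 := fun h => hne ((mul_inv_eq_one₀ hx2).mp h)
  set N : ℕ := e * nz * nζ with hN
  have hN0 : N ≠ 0 := Nat.mul_ne_zero (Nat.mul_ne_zero he0 hnzpos.ne') hnζpos.ne'
  have hpN : ¬ p ∣ N := by
    intro h
    rcases (Nat.Prime.dvd_mul hp).mp h with h | h
    · rcases (Nat.Prime.dvd_mul hp).mp h with h | h
      exacts [htame h, hpnz h]
    · exact hpnζ h
  -- u ^ N = 1
  have hζN : (ζ : E) ^ N = 1 := by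
    rw [hN, show e * nz * nζ = nζ * (e * nz) by ring, pow_mul, hζpow, one_pow]
  have hsN : (s : E) ^ N = ((πE : E) ^ (e * nz)) ^ ((a * nζ : ℤ)) := by
    have h1 : ((πE : E) ^ (a : ℤ)) ^ N = (πE : E) ^ ((a : ℤ) * N) := by
      rw [← zpow_natCast ((πE : E) ^ (a : ℤ)) N, ← zpow_mul]
    have h2 : ((πE : E) ^ (e * nz)) ^ ((a * nζ : ℤ))
        = (πE : E) ^ (((e * nz : ℕ) : ℤ) * (a * nζ)) := by
      rw [← zpow_natCast (πE : E) (e * nz), ← zpow_mul]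
    rw [hsE, mul_pow, hζN, mul_one, h1, h2]
    congr 1
    push_cast [hN]
    ring
  have hTσ : ∀ σ : E →ₐ[F] AlgebraicClosure F,
      (σ (πE : E)) ^ (e * nz) = (algebraMap F (AlgebraicClosure F) πF) ^ nz := by
    intro σ
    have h2 : (σ zE) ^ nz = 1 := by rw [← map_pow, hzpow, map_one]
    calc (σ (πE : E)) ^ (e * nz) = ((σ (πE : E)) ^ e) ^ nz := by rw [pow_mul]
    _ = ((σ (πE : E)) ^ e) ^ nz * ((σ zE) ^ nz) := by rw [h2, mul_one]
    _ = ((σ (πE : E)) ^ e * σ zE) ^ nz := by rw [mul_pow]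
    _ = _ := by rw [hres]
  have hσsN : ∀ σ : E →ₐ[F] AlgebraicClosure F,
      (σ (s : E)) ^ N = ((algebraMap F (AlgebraicClosure F) πF) ^ nz) ^ ((a * nζ : ℤ)) := by
    intro σ
    rw [← map_pow, hsN, map_zpow₀, map_pow, hTσ]
  have hT0 : ((algebraMap F (AlgebraicClosure F) πF) ^ nz) ^ ((a * nζ : ℤ)) ≠ 0 :=
    zpow_ne_zero _ (pow_ne_zero _
      ((map_ne_zero (algebraMap F (AlgebraicClosure F))).mpr hπF0))
  have huN : u ^ N = 1 := by
    rw [hu, mul_pow, inv_pow, hσsN σ₁, hσsN σ₂]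
    exact mul_inv_cancel₀ hT0
  -- ord N = 0
  have hpval : 0 < ord ((p : ℕ) : AlgebraicClosure F) := by
    have hpK : ((p : ℕ) : AlgebraicClosure F)
        = algebraMap F (AlgebraicClosure F) ((p : ℕ) : F) := by
      rw [map_natCast]
    rw [hpK, hordext]
    have h := hF.v_p_pos
    cases hc : vF ((p : ℕ) : F) with
    | top => simp
    | coe c =>
      rw [hc] at h
      have hc0 : (0 : ℤ) < c := by exact_mod_cast h
      simp only [WithTop.map_coe]
      exact_mod_cast hc0
  have hNval : ord ((N : ℕ) : AlgebraicClosure F) = 0 := hord.natCast_eq_zero hp hpval hpN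
  have hordu : ord (u - 1) = 0 := hord.sub_one_eq_zero hN0 huN hune hNval
  have hdiff : σ₁ (s : E) - σ₂ (s : E) = σ₂ (s : E) * (u - 1) := by
    rw [hu]
    field_simp
  rw [hdiff, hord.map_mul, hordu, add_zero, hords σ₂]
  congr 1
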